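/- arXiv:1509.03805 — 2 statements merged into one kernel-verified Lean document; each statement's English description precedes it below -/
import Mathlib

section
/- With notation as below, assume in addition 𝒥_n(2ω) ≠ 0, and for q ∈ ℂ define β_ρ = q·((t₃(ρ)·t₄'(ρ) − t₄(ρ)·t₃'(ρ))·ℋ_n(2ω) + t₄'(ρ)·𝒥_n(2ω))/(t₃(ρ)·ℋ_n(2ω) + 𝒥_n(2ω)). Then for all sufficiently small ρ > 0 both D'_n(ρ) and t₃(ρ)·ℋ_n(2ω) + 𝒥_n(2ω) are nonzero, and lim_{ρ→0⁺} β_ρ = −(h_n(kω)/j_n(kω))·q. -/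
open Filter Topology
open scoped Nat

/-- `sphf n` from Rayleigh's formula: `sphf 0 t = sin t / t`,
`sphf (m+1) t = (sphf m)'(t) / t`. -/
noncomputable def sphf : ℕ → ℝ → ℝ
  | 0 => fun t => Real.sin t / t
  | m + 1 => fun t => deriv (sphf m) t / t

/-- `sphg n` from Rayleigh's formula: `sphg 0 t = cos t / t`,
`sphg (m+1) t = (sphg m)'(t) / t`. -/
noncomputable def sphg : ℕ → ℝ → ℝ
  | 0 => fun t => Real.cos t / t
  | m + 1 => fun t => deriv (sphg m) t / t

/-- The spherical Bessel function of the first kind, `j_n(t) = (-1)ⁿ tⁿ f_n(t)`. -/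
noncomputable def sphj (n : ℕ) (t : ℝ) : ℝ := (-1) ^ n * t ^ n * sphf n t

/-- The spherical Bessel function of the second kind, `y_n(t) = -(-1)ⁿ tⁿ g_n(t)`. -/
noncomputable def sphy (n : ℕ) (t : ℝ) : ℝ := -((-1) ^ n * t ^ n * sphg n t)

/-- The spherical Hankel function of the first kind, `h_n(t) = j_n(t) + i y_n(t)`. -/
noncomputable def sphh (n : ℕ) (t : ℝ) : ℂ := (sphj n t : ℂ) + Complex.I * (sphy n t : ℂ)

/-- `𝒥_n(t) = j_n(t) + t j_n'(t)`. -/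
noncomputable def sphJ (n : ℕ) (t : ℝ) : ℝ := sphj n t + t * deriv (sphj n) t

/-- `ℋ_n(t) = h_n(t) + t h_n'(t)`. -/
noncomputable def sphH (n : ℕ) (t : ℝ) : ℂ := sphh n t + t * deriv (sphh n) t

/-- The determinant `D'_n(ρ) = ε₀^{-1/2} ρ h_n(ωρ) 𝒥_n(kω) - μ₀^{-1/2} k ℋ_n(ωρ) j_n(kω)`. -/
noncomputable def Dn' (ε₀ μ₀ ω k : ℝ) (n : ℕ) (ρ : ℝ) : ℂ :=
  (Real.sqrt ε₀)⁻¹ * ρ * sphh n (ω * ρ) * sphJ n (k * ω)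
    - (Real.sqrt μ₀)⁻¹ * k * sphH n (ω * ρ) * sphj n (k * ω)

/-- `t₃(ρ) = (μ₀^{-1/2} k 𝒥_n(ωρ) j_n(kω) - ε₀^{-1/2} ρ j_n(ωρ) 𝒥_n(kω)) / D'_n(ρ)`. -/
noncomputable def t3 (ε₀ μ₀ ω k : ℝ) (n : ℕ) (ρ : ℝ) : ℂ :=
  ((Real.sqrt μ₀)⁻¹ * k * sphJ n (ω * ρ) * sphj n (k * ω)
    - (Real.sqrt ε₀)⁻¹ * ρ * sphj n (ω * ρ) * sphJ n (k * ω)) / Dn' ε₀ μ₀ ω k n ρ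

/-- `t₄(ρ) = ρ (𝒥_n(ωρ) h_n(ωρ) - j_n(ωρ) ℋ_n(ωρ)) / D'_n(ρ)`. -/
noncomputable def t4 (ε₀ μ₀ ω k : ℝ) (n : ℕ) (ρ : ℝ) : ℂ :=
  (ρ * (sphJ n (ω * ρ) * sphh n (ω * ρ) - sphj n (ω * ρ) * sphH n (ω * ρ)))
    / Dn' ε₀ μ₀ ω k n ρ

/-- `t₃'(ρ) = (𝒥_n(kω) h_n(kω) - ℋ_n(kω) j_n(kω)) / D'_n(ρ)`. -/
noncomputable def t3' (ε₀ μ₀ ω k : ℝ) (n : ℕ) (ρ : ℝ) : ℂ :=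
  (sphJ n (k * ω) * sphh n (k * ω) - sphH n (k * ω) * sphj n (k * ω))
    / Dn' ε₀ μ₀ ω k n ρ

/-- `t₄'(ρ) = (μ₀^{-1/2} k h_n(kω) ℋ_n(ωρ) - ε₀^{-1/2} ρ ℋ_n(kω) h_n(ωρ)) / D'_n(ρ)`. -/
noncomputable def t4' (ε₀ μ₀ ω k : ℝ) (n : ℕ) (ρ : ℝ) : ℂ :=
  ((Real.sqrt μ₀)⁻¹ * k * sphh n (k * ω) * sphH n (ω * ρ)
    - (Real.sqrt ε₀)⁻¹ * ρ * sphH n (k * ω) * sphh n (ω * ρ)) / Dn' ε₀ μ₀ ω k n ρ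


section SphAux
open Polynomial

noncomputable def gP : ℕ → Polynomial ℝ × Polynomial ℝ
  | 0 => (1, 0)
  | m + 1 =>
    (X * ((gP m).1.derivative + (gP m).2) - C (2 * (m : ℝ) + 1) * (gP m).1,
     X * ((gP m).2.derivative - (gP m).1) - C (2 * (m : ℝ) + 1) * (gP m).2)

noncomputable def fP : ℕ → Polynomial ℝ × Polynomial ℝ
  | 0 => (1, 0)
  | m + 1 =>
    (X * ((fP m).1.derivative - (fP m).2) - C (2 * (m : ℝ) + 1) * (fP m).1,
     X * ((fP m).2.derivative + (fP m).1) - C (2 * (m : ℝ) + 1) * (fP m).2)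

lemma aux_hasDerivAt (a b : Polynomial ℝ) (k : ℕ) {t : ℝ} (ht : t ≠ 0) :
    HasDerivAt (fun s : ℝ => (a.eval s * Real.cos s + b.eval s * Real.sin s) / s ^ (k + 1))
      ((((a.derivative.eval t + b.eval t) * Real.cos t
          + (b.derivative.eval t - a.eval t) * Real.sin t) * t
        - (k + 1) * (a.eval t * Real.cos t + b.eval t * Real.sin t)) / t ^ (k + 2)) t := by
  have hN : HasDerivAt (fun s : ℝ => a.eval s * Real.cos s + b.eval s * Real.sin s)
      (a.derivative.eval t * Real.cos t + a.eval t * (-Real.sin t)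
        + (b.derivative.eval t * Real.sin t + b.eval t * Real.cos t)) t :=
    ((a.hasDerivAt t).mul (Real.hasDerivAt_cos t)).add
      ((b.hasDerivAt t).mul (Real.hasDerivAt_sin t))
  have hD : HasDerivAt (fun s : ℝ => s ^ (k + 1)) ((k + 1 : ℕ) * t ^ k) t := by
    simpa using hasDerivAt_pow (k + 1) t
  have h := hN.div hD (pow_ne_zero (k + 1) ht)
  refine h.congr_deriv ?_
  have h2 : t ^ k ≠ 0 := pow_ne_zero _ ht
  field_simp
  push_cast
  ring

lemma sphg_eq (m : ℕ) : ∀ t : ℝ, t ≠ 0 →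
    sphg m t = ((gP m).1.eval t * Real.cos t + (gP m).2.eval t * Real.sin t) / t ^ (2 * m + 1) := by
  induction m with
  | zero => intro t ht; simp [sphg, gP]
  | succ m ih =>
    intro t ht
    have hd : deriv (sphg m) t
        = ((((gP m).1.derivative.eval t + (gP m).2.eval t) * Real.cos t
            + ((gP m).2.derivative.eval t - (gP m).1.eval t) * Real.sin t) * t
          - (2 * m + 1) * ((gP m).1.eval t * Real.cos t + (gP m).2.eval t * Real.sin t))
            / t ^ (2 * m + 2) := by
      have hEq : sphg m =ᶠ[𝓝 t] fun s =>
          ((gP m).1.eval s * Real.cos s + (gP m).2.eval s * Real.sin s) / s ^ (2 * m + 1) := by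
        filter_upwards [isOpen_compl_singleton.mem_nhds (by simpa using ht : t ∈ ({0}ᶜ : Set ℝ))]
          with s hs using ih s hs
      rw [hEq.deriv_eq]
      have := (aux_hasDerivAt (gP m).1 (gP m).2 (2 * m) ht).deriv
      convert this using 2 <;> push_cast <;> ring
    show deriv (sphg m) t / t = _
    rw [hd]
    simp only [gP, eval_sub, eval_mul, eval_add, eval_X, eval_C]
    have h2 : t ^ (2 * m + 2) ≠ 0 := pow_ne_zero _ ht
    have h3 : t ^ (2 * (m + 1) + 1) = t ^ (2 * m + 2) * t := by ring
    rw [h3]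
    field_simp
    ring

lemma sphf_eq (m : ℕ) : ∀ t : ℝ, t ≠ 0 →
    sphf m t = ((fP m).2.eval t * Real.cos t + (fP m).1.eval t * Real.sin t) / t ^ (2 * m + 1) := by
  induction m with
  | zero => intro t ht; simp [sphf, fP]
  | succ m ih =>
    intro t ht
    have hd : deriv (sphf m) t
        = ((((fP m).2.derivative.eval t + (fP m).1.eval t) * Real.cos t
            + ((fP m).1.derivative.eval t - (fP m).2.eval t) * Real.sin t) * t
          - (2 * m + 1) * ((fP m).2.eval t * Real.cos t + (fP m).1.eval t * Real.sin t))
            / t ^ (2 * m + 2) := by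
      have hEq : sphf m =ᶠ[𝓝 t] fun s =>
          ((fP m).2.eval s * Real.cos s + (fP m).1.eval s * Real.sin s) / s ^ (2 * m + 1) := by
        filter_upwards [isOpen_compl_singleton.mem_nhds (by simpa using ht : t ∈ ({0}ᶜ : Set ℝ))]
          with s hs using ih s hs
      rw [hEq.deriv_eq]
      have := (aux_hasDerivAt (fP m).2 (fP m).1 (2 * m) ht).deriv
      convert this using 2 <;> push_cast <;> ring
    show deriv (sphf m) t / t = _
    rw [hd]
    simp only [fP, eval_sub, eval_mul, eval_add, eval_X, eval_C]
    have h2 : t ^ (2 * m + 2) ≠ 0 := pow_ne_zero _ ht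
    have h3 : t ^ (2 * (m + 1) + 1) = t ^ (2 * m + 2) * t := by ring
    rw [h3]
    field_simp
    ring

lemma fPq0 (n : ℕ) : (fP n).2.eval 0 = 0 := by
  induction n with
  | zero => simp [fP]
  | succ m ih => simp [fP, ih]

lemma gPq0 (n : ℕ) : (gP n).2.eval 0 = 0 := by
  induction n with
  | zero => simp [gP]
  | succ m ih => simp [gP, ih]

lemma gPp0 (n : ℕ) : (gP n).1.eval 0 ≠ 0 := by
  induction n with
  | zero => simp [gP]
  | succ m ih =>
    simp only [gP, eval_sub, eval_mul, eval_add, eval_X, eval_C, zero_mul, zero_sub, neg_ne_zero]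
    positivity

lemma sphj_eq (n : ℕ) {t : ℝ} (ht : t ≠ 0) :
    sphj n t = (-1) ^ n
      * (((fP n).2.eval t * Real.cos t + (fP n).1.eval t * Real.sin t) / t ^ (n + 1)) := by
  rw [sphj, sphf_eq n t ht]
  rw [show 2 * n + 1 = n + (n + 1) by ring, pow_add]
  field_simp

lemma sphy_eq (n : ℕ) {t : ℝ} (ht : t ≠ 0) :
    sphy n t = -((-1) ^ n
      * (((gP n).1.eval t * Real.cos t + (gP n).2.eval t * Real.sin t) / t ^ (n + 1))) := by
  rw [sphy, sphg_eq n t ht]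
  rw [show 2 * n + 1 = n + (n + 1) by ring, pow_add]
  field_simp

noncomputable def jD (n : ℕ) (t : ℝ) : ℝ := (-1) ^ n
  * (((((fP n).2.derivative.eval t + (fP n).1.eval t) * Real.cos t
      + ((fP n).1.derivative.eval t - (fP n).2.eval t) * Real.sin t) * t
    - (n + 1) * ((fP n).2.eval t * Real.cos t + (fP n).1.eval t * Real.sin t)) / t ^ (n + 2))

noncomputable def yD (n : ℕ) (t : ℝ) : ℝ := -((-1) ^ n
  * (((((gP n).1.derivative.eval t + (gP n).2.eval t) * Real.cos t
      + ((gP n).2.derivative.eval t - (gP n).1.eval t) * Real.sin t) * t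
    - (n + 1) * ((gP n).1.eval t * Real.cos t + (gP n).2.eval t * Real.sin t)) / t ^ (n + 2)))

lemma sphj_hasDerivAt (n : ℕ) {t : ℝ} (ht : t ≠ 0) : HasDerivAt (sphj n) (jD n t) t := by
  have h := ((aux_hasDerivAt (fP n).2 (fP n).1 n ht).const_mul ((-1 : ℝ) ^ n))
  apply h.congr_of_eventuallyEq
  filter_upwards [isOpen_compl_singleton.mem_nhds (by simpa using ht : t ∈ ({0}ᶜ : Set ℝ))]
    with s hs
  exact sphj_eq n hs

lemma sphy_hasDerivAt (n : ℕ) {t : ℝ} (ht : t ≠ 0) : HasDerivAt (sphy n) (yD n t) t := by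
  have h := ((aux_hasDerivAt (gP n).1 (gP n).2 n ht).const_mul ((-1 : ℝ) ^ n)).neg
  apply h.congr_of_eventuallyEq
  filter_upwards [isOpen_compl_singleton.mem_nhds (by simpa using ht : t ∈ ({0}ᶜ : Set ℝ))]
    with s hs
  exact sphy_eq n hs

lemma tendsto_j (n : ℕ) :
    Tendsto (fun t : ℝ => t ^ (n + 1) * sphj n t) (nhdsWithin 0 (Set.Ioi 0)) (nhds 0) := by
  have hcont : Continuous (fun t : ℝ => (-1 : ℝ) ^ n
      * ((fP n).2.eval t * Real.cos t + (fP n).1.eval t * Real.sin t)) :=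
    continuous_const.mul ((((fP n).2.continuous).mul Real.continuous_cos).add
      (((fP n).1.continuous).mul Real.continuous_sin))
  have h0 : ((-1 : ℝ) ^ n
      * ((fP n).2.eval 0 * Real.cos 0 + (fP n).1.eval 0 * Real.sin 0)) = 0 := by
    simp [fPq0]
  have := (hcont.tendsto 0).mono_left (nhdsWithin_le_nhds (s := Set.Ioi (0:ℝ)))
  rw [h0] at this
  apply this.congr'
  filter_upwards [self_mem_nhdsWithin] with t (ht : 0 < t)
  have ht' : t ≠ 0 := ne_of_gt ht
  rw [sphj_eq n ht']
  field_simp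

lemma tendsto_J (n : ℕ) :
    Tendsto (fun t : ℝ => t ^ (n + 1) * (sphj n t + t * deriv (sphj n) t))
      (nhdsWithin 0 (Set.Ioi 0)) (nhds 0) := by
  have hcont : Continuous (fun t : ℝ => (-1 : ℝ) ^ n
      * (-(n : ℝ) * ((fP n).2.eval t * Real.cos t + (fP n).1.eval t * Real.sin t)
        + (((fP n).2.derivative.eval t + (fP n).1.eval t) * Real.cos t
          + ((fP n).1.derivative.eval t - (fP n).2.eval t) * Real.sin t) * t)) := by
    apply continuous_const.mul
    apply Continuous.add
    · exact continuous_const.mul ((((fP n).2.continuous).mul Real.continuous_cos).add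
        (((fP n).1.continuous).mul Real.continuous_sin))
    · exact (((((fP n).2.derivative.continuous).add ((fP n).1.continuous)).mul
        Real.continuous_cos).add
          (((((fP n).1.derivative.continuous).sub ((fP n).2.continuous))).mul
            Real.continuous_sin)).mul continuous_id
  have h0 : ((-1 : ℝ) ^ n
      * (-(n : ℝ) * ((fP n).2.eval 0 * Real.cos 0 + (fP n).1.eval 0 * Real.sin 0)
        + (((fP n).2.derivative.eval 0 + (fP n).1.eval 0) * Real.cos 0
          + (((fP n).1.derivative.eval 0 - (fP n).2.eval 0)) * Real.sin 0) * 0)) = 0 := by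
    simp [fPq0]
  have := (hcont.tendsto 0).mono_left (nhdsWithin_le_nhds (s := Set.Ioi (0:ℝ)))
  rw [h0] at this
  apply this.congr'
  filter_upwards [self_mem_nhdsWithin] with t (ht : 0 < t)
  have ht' : t ≠ 0 := ne_of_gt ht
  rw [(sphj_hasDerivAt n ht').deriv, sphj_eq n ht', jD]
  field_simp
  ring

lemma tendsto_y (n : ℕ) :
    Tendsto (fun t : ℝ => t ^ (n + 1) * sphy n t) (nhdsWithin 0 (Set.Ioi 0))
      (nhds (-((-1 : ℝ) ^ n * (gP n).1.eval 0))) := by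
  have hcont : Continuous (fun t : ℝ => -((-1 : ℝ) ^ n
      * ((gP n).1.eval t * Real.cos t + (gP n).2.eval t * Real.sin t))) :=
    (continuous_const.mul ((((gP n).1.continuous).mul Real.continuous_cos).add
      (((gP n).2.continuous).mul Real.continuous_sin))).neg
  have h0 : -((-1 : ℝ) ^ n
      * ((gP n).1.eval 0 * Real.cos 0 + (gP n).2.eval 0 * Real.sin 0))
      = -((-1 : ℝ) ^ n * (gP n).1.eval 0) := by simp [gPq0]
  have := (hcont.tendsto 0).mono_left (nhdsWithin_le_nhds (s := Set.Ioi (0:ℝ)))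
  rw [h0] at this
  apply this.congr'
  filter_upwards [self_mem_nhdsWithin] with t (ht : 0 < t)
  have ht' : t ≠ 0 := ne_of_gt ht
  rw [sphy_eq n ht']
  field_simp

lemma tendsto_Y (n : ℕ) :
    Tendsto (fun t : ℝ => t ^ (n + 1) * (sphy n t + t * deriv (sphy n) t))
      (nhdsWithin 0 (Set.Ioi 0)) (nhds ((n : ℝ) * ((-1 : ℝ) ^ n * (gP n).1.eval 0))) := by
  have hcont : Continuous (fun t : ℝ => -((-1 : ℝ) ^ n
      * (-(n : ℝ) * ((gP n).1.eval t * Real.cos t + (gP n).2.eval t * Real.sin t)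
        + (((gP n).1.derivative.eval t + (gP n).2.eval t) * Real.cos t
          + ((gP n).2.derivative.eval t - (gP n).1.eval t) * Real.sin t) * t))) := by
    apply Continuous.neg
    apply continuous_const.mul
    apply Continuous.add
    · exact continuous_const.mul ((((gP n).1.continuous).mul Real.continuous_cos).add
        (((gP n).2.continuous).mul Real.continuous_sin))
    · exact (((((gP n).1.derivative.continuous).add ((gP n).2.continuous)).mul
        Real.continuous_cos).add
          (((((gP n).2.derivative.continuous).sub ((gP n).1.continuous))).mul
            Real.continuous_sin)).mul continuous_id
  have h0 : -((-1 : ℝ) ^ n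
      * (-(n : ℝ) * ((gP n).1.eval 0 * Real.cos 0 + (gP n).2.eval 0 * Real.sin 0)
        + (((gP n).1.derivative.eval 0 + (gP n).2.eval 0) * Real.cos 0
          + ((gP n).2.derivative.eval 0 - (gP n).1.eval 0) * Real.sin 0) * 0))
      = (n : ℝ) * ((-1 : ℝ) ^ n * (gP n).1.eval 0) := by
    simp [gPq0]; ring
  have := (hcont.tendsto 0).mono_left (nhdsWithin_le_nhds (s := Set.Ioi (0:ℝ)))
  rw [h0] at this
  apply this.congr'
  filter_upwards [self_mem_nhdsWithin] with t (ht : 0 < t)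
  have ht' : t ≠ 0 := ne_of_gt ht
  rw [(sphy_hasDerivAt n ht').deriv, sphy_eq n ht', yD]
  field_simp
  ring

lemma sphjD (n : ℕ) {t : ℝ} (ht : t ≠ 0) : HasDerivAt (sphj n) (deriv (sphj n) t) t :=
  (sphj_hasDerivAt n ht).differentiableAt.hasDerivAt

lemma sphyD (n : ℕ) {t : ℝ} (ht : t ≠ 0) : HasDerivAt (sphy n) (deriv (sphy n) t) t :=
  (sphy_hasDerivAt n ht).differentiableAt.hasDerivAt

lemma div_alg (q A B Cc E F d H2 J2 : ℂ) (hd : d ≠ 0)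
    (hnum : A * H2 + J2 * d ≠ 0)
    (hIdent : A * E - B * Cc = -(d * F)) :
    q * ((A / d * (E / d) - B / d * (Cc / d)) * H2 + E / d * J2) / (A / d * H2 + J2)
      = q * (E * J2 - F * H2) / (A * H2 + J2 * d) := by
  have h1 : A / d * (E / d) - B / d * (Cc / d) = -(F / d) := by
    field_simp
    linear_combination hIdent
  rw [h1]
  have h2 : -(F / d) * H2 + E / d * J2 = (E * J2 - F * H2) / d := by
    field_simp
    ring
  have h3 : A / d * H2 + J2 = (A * H2 + J2 * d) / d := by
    field_simp
  rw [h2, h3, ← mul_div_assoc, div_div_div_cancel_right₀ hd]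



end SphAux

/-- The interior field coefficient `β_ρ` of the approximate cloak with source coefficient `q`
and zero exterior boundary data converges, as `ρ → 0⁺`, to `-(h_n(kω)/j_n(kω)) q`; moreover,
for all small `ρ > 0` the denominators `D'_n(ρ)` and `t₃(ρ)ℋ_n(2ω) + 𝒥_n(2ω)` are nonzero. -/
theorem beta_rho_limit (ε₀ μ₀ ω : ℝ)
    (hε : 0 < ε₀) (hμ : 0 < μ₀) (hω : 0 < ω)
    (k : ℝ) (hk : k = Real.sqrt (μ₀ * ε₀)) (n : ℕ) (hn : 1 ≤ n)
    (hj : sphj n (k * ω) ≠ 0) (hJ2 : sphJ n (2 * ω) ≠ 0) (q : ℂ) :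
    ∃ ρ₀ > (0 : ℝ),
      (∀ ρ : ℝ, 0 < ρ → ρ < ρ₀ → Dn' ε₀ μ₀ ω k n ρ ≠ 0 ∧
        t3 ε₀ μ₀ ω k n ρ * sphH n (2 * ω) + sphJ n (2 * ω) ≠ 0) ∧
      Tendsto (fun ρ : ℝ =>
          q * ((t3 ε₀ μ₀ ω k n ρ * t4' ε₀ μ₀ ω k n ρ
                - t4 ε₀ μ₀ ω k n ρ * t3' ε₀ μ₀ ω k n ρ) * sphH n (2 * ω)
              + t4' ε₀ μ₀ ω k n ρ * sphJ n (2 * ω))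
            / (t3 ε₀ μ₀ ω k n ρ * sphH n (2 * ω) + sphJ n (2 * ω)))
        (𝓝[>] 0) (𝓝 (-(sphh n (k * ω) / sphj n (k * ω)) * q)) := by
  -- basic nonzero facts
  have hk0 : 0 < k := hk ▸ Real.sqrt_pos.mpr (mul_pos hμ hε)
  have hsqμ : Real.sqrt μ₀ ≠ 0 := (Real.sqrt_pos.mpr hμ).ne'
  have hsqε : Real.sqrt ε₀ ≠ 0 := (Real.sqrt_pos.mpr hε).ne'
  have hsqμC : ((Real.sqrt μ₀ : ℝ) : ℂ) ≠ 0 := Complex.ofReal_ne_zero.mpr hsqμ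
  have hsqεC : ((Real.sqrt ε₀ : ℝ) : ℂ) ≠ 0 := Complex.ofReal_ne_zero.mpr hsqε
  have hkC : (k : ℂ) = (Real.sqrt μ₀ : ℝ) * (Real.sqrt ε₀ : ℝ) := by
    rw [hk, Real.sqrt_mul hμ.le]; push_cast; ring
  set aC : ℂ := ((Real.sqrt μ₀ : ℝ) : ℂ)⁻¹ * (k : ℂ) with haC_def
  set eC : ℂ := ((Real.sqrt ε₀ : ℝ) : ℂ)⁻¹ with heC_def
  have haC : aC ≠ 0 := mul_ne_zero (inv_ne_zero hsqμC) (Complex.ofReal_ne_zero.mpr hk0.ne')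
  have hJkC : ((sphj n (k * ω) : ℝ) : ℂ) ≠ 0 := Complex.ofReal_ne_zero.mpr hj
  have hJ2C : ((sphJ n (2 * ω) : ℝ) : ℂ) ≠ 0 := Complex.ofReal_ne_zero.mpr hJ2
  set c0 : ℝ := (-1 : ℝ) ^ n * (gP n).1.eval 0 with hc0_def
  have hc0 : c0 ≠ 0 := mul_ne_zero (pow_ne_zero _ (by norm_num)) (gPp0 n)
  have hnne : (n : ℂ) ≠ 0 := Nat.cast_ne_zero.mpr (by omega)
  -- t = ω ρ tends to 0+
  have htω : Tendsto (fun ρ : ℝ => ω * ρ) (𝓝[>] 0) (𝓝[>] 0) := by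
    rw [tendsto_nhdsWithin_iff]
    constructor
    · have h1 : Tendsto (fun ρ : ℝ => ω * ρ) (𝓝 0) (𝓝 (ω * 0)) :=
        (continuous_const.mul continuous_id).tendsto 0
      rw [mul_zero] at h1
      exact h1.mono_left nhdsWithin_le_nhds
    · filter_upwards [self_mem_nhdsWithin] with ρ (hρ : 0 < ρ)
      exact mul_pos hω hρ
  -- coerced limit building blocks
  have hρC : Tendsto (fun ρ : ℝ => (ρ : ℂ)) (𝓝[>] 0) (𝓝 0) := by
    have := (Complex.continuous_ofReal.tendsto 0).mono_left
      (nhdsWithin_le_nhds (s := Set.Ioi (0:ℝ)))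
    simpa using this
  have castlim : ∀ (f : ℝ → ℝ) (L : ℝ), Tendsto f (𝓝[>] 0) (𝓝 L) →
      Tendsto (fun ρ : ℝ => ((f (ω * ρ) : ℝ) : ℂ)) (𝓝[>] 0) (𝓝 (L : ℂ)) := by
    intro f L hf
    exact (Complex.continuous_ofReal.tendsto L).comp (hf.comp htω)
  have hW : Tendsto (fun ρ : ℝ => (((ω * ρ) ^ (n + 1) * sphj n (ω * ρ) : ℝ) : ℂ))
      (𝓝[>] 0) (𝓝 0) := by
    have := castlim (fun t => t ^ (n + 1) * sphj n t) 0 (tendsto_j n)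
    simpa using this
  have hX : Tendsto (fun ρ : ℝ => (((ω * ρ) ^ (n + 1) * sphJ n (ω * ρ) : ℝ) : ℂ))
      (𝓝[>] 0) (𝓝 0) := by
    have := castlim (fun t => t ^ (n + 1) * (sphj n t + t * deriv (sphj n) t)) 0 (tendsto_J n)
    simpa [sphJ] using this
  have hyc : Tendsto (fun ρ : ℝ => (((ω * ρ) ^ (n + 1) * sphy n (ω * ρ) : ℝ) : ℂ))
      (𝓝[>] 0) (𝓝 (-c0 : ℝ)) := castlim _ _ (tendsto_y n)
  have hYc : Tendsto (fun ρ : ℝ =>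
        (((ω * ρ) ^ (n + 1) * (sphy n (ω * ρ) + (ω * ρ) * deriv (sphy n) (ω * ρ)) : ℝ) : ℂ))
      (𝓝[>] 0) (𝓝 ((n : ℝ) * c0 : ℝ)) := castlim _ _ (tendsto_Y n)
  -- U, V
  have hU : Tendsto (fun ρ : ℝ => (((ω * ρ) ^ (n + 1) : ℝ) : ℂ) * sphh n (ω * ρ))
      (𝓝[>] 0) (𝓝 (-(c0 : ℂ) * Complex.I)) := by
    have h := hW.add (hyc.const_mul Complex.I)
    have h2 : (0 : ℂ) + Complex.I * ((-c0 : ℝ) : ℂ) = -(c0 : ℂ) * Complex.I := by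
      push_cast; ring
    rw [h2] at h
    apply h.congr
    intro ρ
    rw [sphh]
    push_cast
    ring
  have hderh : ∀ t : ℝ, t ≠ 0 →
      deriv (sphh n) t = ((deriv (sphj n) t : ℝ) : ℂ)
        + Complex.I * ((deriv (sphy n) t : ℝ) : ℂ) := by
    intro t ht
    have h := ((sphjD n ht).ofReal_comp).add (((sphyD n ht).ofReal_comp).const_mul Complex.I)
    have he : sphh n = fun x : ℝ => ((sphj n x : ℝ) : ℂ) + Complex.I * ((sphy n x : ℝ) : ℂ) :=
      funext fun x => rfl
    rw [he]
    exact h.deriv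
  have hV : Tendsto (fun ρ : ℝ => (((ω * ρ) ^ (n + 1) : ℝ) : ℂ) * sphH n (ω * ρ))
      (𝓝[>] 0) (𝓝 ((n : ℂ) * (c0 : ℂ) * Complex.I)) := by
    have h := hX.add (hYc.const_mul Complex.I)
    have h2 : (0 : ℂ) + Complex.I * (((n : ℝ) * c0 : ℝ) : ℂ)
        = (n : ℂ) * (c0 : ℂ) * Complex.I := by push_cast; ring
    rw [h2] at h
    apply h.congr'
    filter_upwards [self_mem_nhdsWithin] with ρ (hρ : 0 < ρ)
    have ht : ω * ρ ≠ 0 := (mul_pos hω hρ).ne'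
    rw [sphH, hderh _ ht, sphh, sphJ]
    push_cast
    ring
  -- name the constants
  set Jk : ℝ := sphj n (k * ω) with hJk_def
  set JJk : ℝ := sphJ n (k * ω) with hJJk_def
  set Hk : ℂ := sphh n (k * ω) with hHk_def
  set HHk : ℂ := sphH n (k * ω) with hHHk_def
  set H2 : ℂ := sphH n (2 * ω) with hH2_def
  set J2 : ℝ := sphJ n (2 * ω) with hJ2_def
  have hc0C : ((c0 : ℝ) : ℂ) ≠ 0 := Complex.ofReal_ne_zero.mpr hc0
  -- named functions
  set Uf : ℝ → ℂ := fun ρ => (((ω * ρ) ^ (n + 1) : ℝ) : ℂ) * sphh n (ω * ρ) with hUf_def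
  set Vf : ℝ → ℂ := fun ρ => (((ω * ρ) ^ (n + 1) : ℝ) : ℂ) * sphH n (ω * ρ) with hVf_def
  set Wf : ℝ → ℂ := fun ρ => (((ω * ρ) ^ (n + 1) * sphj n (ω * ρ) : ℝ) : ℂ) with hWf_def
  set Xf : ℝ → ℂ := fun ρ => (((ω * ρ) ^ (n + 1) * sphJ n (ω * ρ) : ℝ) : ℂ) with hXf_def
  set TDf : ℝ → ℂ := fun ρ => eC * ↑ρ * ↑JJk * Uf ρ - aC * ↑Jk * Vf ρ with hTDf_def
  set num3f : ℝ → ℂ := fun ρ => aC * ↑Jk * Xf ρ - eC * ↑ρ * ↑JJk * Wf ρ with hnum3f_def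
  set Drf : ℝ → ℂ := fun ρ => num3f ρ * H2 + ↑J2 * TDf ρ with hDrf_def
  set Ef : ℝ → ℂ := fun ρ => aC * Hk * Vf ρ - eC * ↑ρ * HHk * Uf ρ with hEf_def
  set Ff : ℝ → ℂ := fun ρ => aC * Hk * Xf ρ - eC * ↑ρ * HHk * Wf ρ with hFf_def
  set Nrf : ℝ → ℂ := fun ρ => Ef ρ * ↑J2 - Ff ρ * H2 with hNrf_def
  -- limits
  have hTD : Tendsto TDf (𝓝[>] 0) (𝓝 (-(aC * ↑Jk * ((n : ℂ) * ↑c0 * Complex.I)))) := by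
    have h1 := ((hρC.const_mul eC).mul_const ((JJk : ℝ) : ℂ)).mul hU
    have h2 := hV.const_mul (aC * (Jk : ℂ))
    have h3 := h1.sub h2
    have heq : eC * 0 * ↑JJk * (-(c0 : ℂ) * Complex.I) - aC * ↑Jk * ((n : ℂ) * ↑c0 * Complex.I)
        = -(aC * ↑Jk * ((n : ℂ) * ↑c0 * Complex.I)) := by ring
    rw [heq] at h3
    exact h3
  have hLTD_ne : -(aC * (Jk : ℂ) * ((n : ℂ) * (c0 : ℂ) * Complex.I)) ≠ 0 := by
    rw [neg_ne_zero]
    exact mul_ne_zero (mul_ne_zero haC hJkC)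
      (mul_ne_zero (mul_ne_zero hnne hc0C) Complex.I_ne_zero)
  have hDr : Tendsto Drf (𝓝[>] 0)
      (𝓝 (↑J2 * -(aC * ↑Jk * ((n : ℂ) * ↑c0 * Complex.I)))) := by
    have h1 := (((hX.const_mul (aC * (Jk : ℂ))).sub
      (((hρC.const_mul eC).mul_const ((JJk : ℝ) : ℂ)).mul hW)).mul_const H2).add
        (hTD.const_mul ((J2 : ℝ) : ℂ))
    have heq : (aC * ↑Jk * 0 - eC * 0 * ↑JJk * 0) * H2
        + ↑J2 * -(aC * ↑Jk * ((n : ℂ) * ↑c0 * Complex.I))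
        = ↑J2 * -(aC * ↑Jk * ((n : ℂ) * ↑c0 * Complex.I)) := by ring
    rw [heq] at h1
    exact h1
  have hLd_ne : ((J2 : ℝ) : ℂ) * -(aC * (Jk : ℂ) * ((n : ℂ) * (c0 : ℂ) * Complex.I)) ≠ 0 :=
    mul_ne_zero hJ2C hLTD_ne
  have hNr : Tendsto Nrf (𝓝[>] 0)
      (𝓝 (aC * Hk * ((n : ℂ) * ↑c0 * Complex.I) * ↑J2)) := by
    have h1 := (((hV.const_mul (aC * Hk)).sub
      (((hρC.const_mul eC).mul_const HHk).mul hU)).mul_const ((J2 : ℝ) : ℂ)).sub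
        ((((hX.const_mul (aC * Hk)).sub
          (((hρC.const_mul eC).mul_const HHk).mul hW)).mul_const H2))
    have heq : (aC * Hk * ((n : ℂ) * ↑c0 * Complex.I) - eC * 0 * HHk * (-(c0 : ℂ) * Complex.I))
          * ↑J2 - (aC * Hk * 0 - eC * 0 * HHk * 0) * H2
        = aC * Hk * ((n : ℂ) * ↑c0 * Complex.I) * ↑J2 := by ring
    rw [heq] at h1
    exact h1
  have haeC : aC * eC = 1 := by
    rw [haC_def, heC_def, hkC]
    field_simp
  have heCeq : eC = aC⁻¹ := by
    field_simp [haC]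
    linear_combination haeC
  -- key pointwise lemma
  have key : ∀ ρ : ℝ, 0 < ρ → TDf ρ ≠ 0 → Drf ρ ≠ 0 →
      Dn' ε₀ μ₀ ω k n ρ ≠ 0 ∧ (t3 ε₀ μ₀ ω k n ρ * H2 + (J2 : ℂ) ≠ 0) ∧
      q * ((t3 ε₀ μ₀ ω k n ρ * t4' ε₀ μ₀ ω k n ρ
            - t4 ε₀ μ₀ ω k n ρ * t3' ε₀ μ₀ ω k n ρ) * H2
          + t4' ε₀ μ₀ ω k n ρ * (J2 : ℂ))
        / (t3 ε₀ μ₀ ω k n ρ * H2 + (J2 : ℂ))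
        = q * Nrf ρ / Drf ρ := by
    intro ρ hρ hTD0 hDr0
    have htne : ω * ρ ≠ 0 := (mul_pos hω hρ).ne'
    have hTne : (((ω * ρ) ^ (n + 1) : ℝ) : ℂ) ≠ 0 :=
      Complex.ofReal_ne_zero.mpr (pow_ne_zero _ htne)
    have hTDeq : TDf ρ = (((ω * ρ) ^ (n + 1) : ℝ) : ℂ) * Dn' ε₀ μ₀ ω k n ρ := by
      simp only [hTDf_def, hUf_def, hVf_def, Dn', haC_def, heC_def, hJk_def, hJJk_def]
      push_cast
      ring
    have hDn : Dn' ε₀ μ₀ ω k n ρ ≠ 0 := by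
      intro h
      apply hTD0
      rw [hTDeq, h, mul_zero]
    set A : ℂ := aC * ↑(sphJ n (ω * ρ)) * ↑Jk - eC * ↑ρ * ↑(sphj n (ω * ρ)) * ↑JJk with hA_def
    set B : ℂ := ↑ρ * (↑(sphJ n (ω * ρ)) * sphh n (ω * ρ)
      - ↑(sphj n (ω * ρ)) * sphH n (ω * ρ)) with hB_def
    set Cc : ℂ := ↑JJk * Hk - HHk * ↑Jk with hC_def
    set E : ℂ := aC * Hk * sphH n (ω * ρ) - eC * ↑ρ * HHk * sphh n (ω * ρ) with hE_def
    set F : ℂ := aC * ↑(sphJ n (ω * ρ)) * Hk - eC * ↑ρ * ↑(sphj n (ω * ρ)) * HHk with hF_def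
    have hdeq : Dn' ε₀ μ₀ ω k n ρ
        = eC * ↑ρ * sphh n (ω * ρ) * ↑JJk - aC * sphH n (ω * ρ) * ↑Jk := by
      simp only [Dn', haC_def, heC_def, hJk_def, hJJk_def]
      push_cast
      ring
    have hDreq : Drf ρ = (((ω * ρ) ^ (n + 1) : ℝ) : ℂ)
        * (A * H2 + ↑J2 * Dn' ε₀ μ₀ ω k n ρ) := by
      simp only [hDrf_def, hnum3f_def, hTDf_def, hXf_def, hWf_def, hUf_def, hVf_def, hA_def,
        Dn', haC_def, heC_def, hJk_def, hJJk_def]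
      push_cast
      ring
    have hnum : A * H2 + ↑J2 * Dn' ε₀ μ₀ ω k n ρ ≠ 0 := by
      intro h
      apply hDr0
      rw [hDreq, h, mul_zero]
    have ht3eq : t3 ε₀ μ₀ ω k n ρ = A / Dn' ε₀ μ₀ ω k n ρ := by
      rw [t3, div_eq_div_iff hDn hDn]
      all_goals simp only [hA_def, haC_def, heC_def, hJk_def, hJJk_def]
      all_goals push_cast
      all_goals ring
    have ht4eq : t4 ε₀ μ₀ ω k n ρ = B / Dn' ε₀ μ₀ ω k n ρ := by
      rw [t4, div_eq_div_iff hDn hDn]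
      all_goals simp only [hB_def]
      all_goals push_cast
      all_goals ring
    have ht3'eq : t3' ε₀ μ₀ ω k n ρ = Cc / Dn' ε₀ μ₀ ω k n ρ := by
      rw [t3', div_eq_div_iff hDn hDn]
      all_goals simp only [hC_def, hJk_def, hJJk_def, hHk_def, hHHk_def]
      all_goals push_cast
      all_goals ring
    have ht4'eq : t4' ε₀ μ₀ ω k n ρ = E / Dn' ε₀ μ₀ ω k n ρ := by
      rw [t4', div_eq_div_iff hDn hDn]
      all_goals simp only [hE_def, haC_def, heC_def, hJk_def, hJJk_def, hHk_def, hHHk_def]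
      all_goals push_cast
      all_goals ring
    have hden : t3 ε₀ μ₀ ω k n ρ * H2 + (J2 : ℂ) ≠ 0 := by
      rw [ht3eq]
      have h2 : A / Dn' ε₀ μ₀ ω k n ρ * H2 + (J2 : ℂ)
          = (A * H2 + ↑J2 * Dn' ε₀ μ₀ ω k n ρ) / Dn' ε₀ μ₀ ω k n ρ := by
        field_simp
      rw [h2]
      exact div_ne_zero hnum hDn
    refine ⟨hDn, hden, ?_⟩
    have hNreq : Nrf ρ = (((ω * ρ) ^ (n + 1) : ℝ) : ℂ) * (E * ↑J2 - F * H2) := by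
      simp only [hNrf_def, hEf_def, hFf_def, hUf_def, hVf_def, hWf_def, hXf_def, hE_def, hF_def]
      push_cast
      ring
    rw [hNreq, hDreq,
      show q * ((((ω * ρ) ^ (n + 1) : ℝ) : ℂ) * (E * ↑J2 - F * H2))
        = (((ω * ρ) ^ (n + 1) : ℝ) : ℂ) * (q * (E * ↑J2 - F * H2)) from by ring,
      mul_div_mul_left _ _ hTne]
    have hIdent : A * E - B * Cc
        = -((eC * ↑ρ * sphh n (ω * ρ) * ↑JJk - aC * sphH n (ω * ρ) * ↑Jk) * F) := by
      simp only [hA_def, hB_def, hC_def, hE_def, hF_def, heCeq]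
      field_simp [haC]
      ring
    have hIdent' : A * E - B * Cc = -(Dn' ε₀ μ₀ ω k n ρ * F) := by
      rw [hdeq, heCeq]
      rw [heCeq] at hIdent
      exact hIdent
    rw [ht3eq, ht4eq, ht3'eq, ht4'eq]
    exact div_alg q A B Cc E F (Dn' ε₀ μ₀ ω k n ρ) H2 (J2 : ℂ) hDn hnum hIdent'
  -- assemble
  have hEv := (hTD.eventually_ne hLTD_ne).and (hDr.eventually_ne hLd_ne)
  rcases mem_nhdsGT_iff_exists_Ioo_subset.mp hEv with ⟨u, hu, hsub⟩
  refine ⟨u, hu, ?_, ?_⟩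
  · intro ρ h1 h2
    obtain ⟨hTD0, hDr0⟩ := hsub ⟨h1, h2⟩
    exact ⟨(key ρ h1 hTD0 hDr0).1, (key ρ h1 hTD0 hDr0).2.1⟩
  · have hmain := (hNr.const_mul q).div hDr hLd_ne
    have hval : q * (aC * Hk * ((n : ℂ) * ↑c0 * Complex.I) * ↑J2)
        / ((J2 : ℂ) * -(aC * ↑Jk * ((n : ℂ) * ↑c0 * Complex.I))) = -(Hk / (Jk : ℂ)) * q := by
      rw [div_eq_iff hLd_ne]
      field_simp
    rw [hval] at hmain
    apply hmain.congr'
    filter_upwards [hEv, self_mem_nhdsWithin] with ρ hev (hρ : 0 < ρ)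
    exact ((key ρ hρ hev.1 hev.2).2.2).symm
end

section
/- With notation as below, assume in addition 𝒥_n(2ω) ≠ 0, and for q ∈ ℂ define β_ρ = q·((t₃(ρ)·t₄'(ρ) − t₄(ρ)·t₃'(ρ))·ℋ_n(2ω) + t₄'(ρ)·𝒥_n(2ω))/(t₃(ρ)·ℋ_n(2ω) + 𝒥_n(2ω)). Then lim_{ρ→0⁺} (β_ρ·𝒥_n(kω) + q·ℋ_n(kω)) = q·(j_n(kω)·ℋ_n(kω) − h_n(kω)·𝒥_n(kω))/j_n(kω). -/
open Filter Topology
open scoped Nat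

/-- smooth extension of `t^(2m+1) * sphg m t`. -/
noncomputable def Wg : ℕ → ℝ → ℝ
  | 0 => Real.cos
  | m + 1 => fun t => t * deriv (Wg m) t - (2*(m:ℝ)+1) * Wg m t

lemma Wg_contDiff (m : ℕ) : ContDiff ℝ ((⊤:ℕ∞) : WithTop ℕ∞) (Wg m) := by
  induction m with
  | zero => exact Real.contDiff_cos
  | succ m ih =>
    have hd : ContDiff ℝ ((⊤:ℕ∞) : WithTop ℕ∞) (deriv (Wg m)) := (contDiff_infty_iff_deriv.mp ih).2
    exact (contDiff_id.mul hd).sub (contDiff_const.mul ih)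

lemma sphg_eq_Wg (m : ℕ) : ∀ t : ℝ, t ≠ 0 → sphg m t = Wg m t / t^(2*m+1) := by
  induction m with
  | zero => intro t ht; simp [sphg, Wg]
  | succ m ih =>
    intro t ht
    have hev : sphg m =ᶠ[𝓝 t] fun x => Wg m x / x^(2*m+1) :=
      eventually_of_mem (isOpen_compl_singleton.mem_nhds ht) (fun x hx => ih x hx)
    have hW : HasDerivAt (Wg m) (deriv (Wg m) t) t :=
      ((Wg_contDiff m).differentiable (by norm_num) t).hasDerivAt
    have hp : HasDerivAt (fun x : ℝ => x^(2*m+1)) ((2*m+1 : ℕ) * t^(2*m)) t := by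
      simpa using hasDerivAt_pow (2*m+1) t
    have hd : HasDerivAt (fun x => Wg m x / x^(2*m+1))
        ((deriv (Wg m) t * t^(2*m+1) - Wg m t * ((2*m+1 : ℕ) * t^(2*m))) / (t^(2*m+1))^2) t :=
      hW.div hp (pow_ne_zero _ ht)
    have hde : deriv (sphg m) t
        = (deriv (Wg m) t * t^(2*m+1) - Wg m t * ((2*m+1 : ℕ) * t^(2*m))) / (t^(2*m+1))^2 := by
      rw [hev.deriv_eq]; exact hd.deriv
    show deriv (sphg m) t / t = _
    rw [hde]
    show _ = (t * deriv (Wg m) t - (2*(m:ℝ)+1) * Wg m t) / t ^ (2*(m+1)+1)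
    field_simp
    push_cast; ring

lemma sphg_differentiableAt (m : ℕ) {t : ℝ} (ht : t ≠ 0) : DifferentiableAt ℝ (sphg m) t := by
  have hev : (fun x => Wg m x / x^(2*m+1)) =ᶠ[𝓝 t] sphg m :=
    eventually_of_mem (isOpen_compl_singleton.mem_nhds ht) (fun x hx => (sphg_eq_Wg m x hx).symm)
  exact (((Wg_contDiff m).differentiable (by norm_num) t).div
    (differentiableAt_pow _) (pow_ne_zero _ ht)).congr_of_eventuallyEq hev.symm

lemma deriv_sphg (m : ℕ) {t : ℝ} (ht : t ≠ 0) : deriv (sphg m) t = t * sphg (m+1) t := by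
  show _ = t * (deriv (sphg m) t / t)
  field_simp

lemma tendsto_pow_sphg (m : ℕ) :
    Tendsto (fun t : ℝ => t^(2*m+1) * sphg m t) (𝓝[>] 0) (𝓝 (Wg m 0)) := by
  have hc : Tendsto (Wg m) (𝓝[>] (0:ℝ)) (𝓝 (Wg m 0)) :=
    (((Wg_contDiff m).continuous.tendsto 0)).mono_left nhdsWithin_le_nhds
  refine hc.congr' ?_
  filter_upwards [self_mem_nhdsWithin] with t (ht : (0:ℝ) < t)
  rw [sphg_eq_Wg m t ht.ne']
  field_simp

lemma Wg_zero (m : ℕ) : Wg (m+1) 0 = -(2*(m:ℝ)+1) * Wg m 0 := by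
  show (0:ℝ) * _ - _ = _; ring

lemma Wg_zero_ne (m : ℕ) : Wg m 0 ≠ 0 := by
  induction m with
  | zero => show Real.cos 0 ≠ 0; norm_num
  | succ m ih =>
    rw [Wg_zero]
    refine mul_ne_zero ?_ ih
    have : (0:ℝ) < 2*(m:ℝ)+1 := by positivity
    linarith

/-- entire extension of `sphf`. -/
noncomputable def Ff : ℕ → ℂ → ℂ
  | 0 => dslope Complex.sin 0
  | m + 1 => dslope (deriv (Ff m)) 0

lemma Ff_differentiable (m : ℕ) : Differentiable ℂ (Ff m) := by
  induction m with
  | zero =>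
    rw [← differentiableOn_univ]
    exact (Complex.differentiableOn_dslope (univ_mem)).mpr
      Complex.differentiable_sin.differentiableOn
  | succ m ih =>
    have hd : Differentiable ℂ (deriv (Ff m)) :=
      (contDiff_infty_iff_deriv.mp ih.contDiff).2.differentiable (by norm_num)
    rw [← differentiableOn_univ]
    exact (Complex.differentiableOn_dslope (univ_mem)).mpr hd.differentiableOn

lemma Ff_even (m : ℕ) : ∀ z : ℂ, Ff m (-z) = Ff m z := by
  induction m with
  | zero =>
    intro z
    rcases eq_or_ne z 0 with rfl | hz
    · norm_num
    · show dslope Complex.sin 0 (-z) = dslope Complex.sin 0 z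
      rw [dslope_of_ne _ (neg_ne_zero.mpr hz), dslope_of_ne _ hz,
        slope_def_field, slope_def_field]
      simp [Complex.sin_neg, neg_div_neg_eq]
  | succ m ih =>
    have hodd : ∀ z : ℂ, deriv (Ff m) (-z) = -deriv (Ff m) z := by
      intro z
      have : (fun x : ℂ => Ff m (-x)) = Ff m := funext ih
      have h2 := deriv_comp_neg (f := Ff m) (x := z)
      rw [this] at h2
      linear_combination h2
    have h0 : deriv (Ff m) 0 = 0 := by
      have := hodd 0
      rw [neg_zero] at this
      linear_combination this/2
    intro z
    rcases eq_or_ne z 0 with rfl | hz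
    · norm_num
    · show dslope (deriv (Ff m)) 0 (-z) = dslope (deriv (Ff m)) 0 z
      rw [dslope_of_ne _ (neg_ne_zero.mpr hz), dslope_of_ne _ hz,
        slope_def_field, slope_def_field, hodd, h0]
      rw [div_eq_div_iff (show -z-0 ≠ 0 by simpa using hz) (show z-0 ≠ 0 by simpa using hz)]
      ring

lemma deriv_Ff_zero (m : ℕ) : deriv (Ff m) 0 = 0 := by
  have : (fun x : ℂ => Ff m (-x)) = Ff m := funext (Ff_even m)
  have h2 := deriv_comp_neg (f := Ff m) (x := (0:ℂ))
  rw [this] at h2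
  rw [neg_zero] at h2
  linear_combination h2/2

lemma hasDerivAt_Ff_re (m : ℕ) (t : ℝ) :
    HasDerivAt (fun x : ℝ => (Ff m x).re) (deriv (Ff m) t).re t :=
  ((Ff_differentiable m (t:ℂ)).hasDerivAt).real_of_complex

lemma sphf_eq_Ff (m : ℕ) : ∀ t : ℝ, t ≠ 0 → sphf m t = (Ff m t).re := by
  induction m with
  | zero =>
    intro t ht
    have htC : (t:ℂ) ≠ 0 := Complex.ofReal_ne_zero.mpr ht
    show Real.sin t / t = _
    rw [show Ff 0 (t:ℂ) = dslope Complex.sin 0 t from rfl, dslope_of_ne _ htC,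
      slope_def_field]
    rw [Complex.sin_zero, sub_zero, sub_zero, ← Complex.ofReal_sin, ← Complex.ofReal_div,
      Complex.ofReal_re]
  | succ m ih =>
    intro t ht
    have htC : (t:ℂ) ≠ 0 := Complex.ofReal_ne_zero.mpr ht
    have hev : sphf m =ᶠ[𝓝 t] fun x : ℝ => (Ff m x).re :=
      eventually_of_mem (isOpen_compl_singleton.mem_nhds ht) (fun x hx => ih x hx)
    have hde : deriv (sphf m) t = (deriv (Ff m) t).re := by
      rw [hev.deriv_eq]; exact (hasDerivAt_Ff_re m t).deriv
    show deriv (sphf m) t / t = _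
    rw [hde, show Ff (m+1) (t:ℂ) = dslope (deriv (Ff m)) 0 t from rfl, dslope_of_ne _ htC,
      slope_def_field, deriv_Ff_zero, sub_zero, sub_zero]
    rw [show deriv (Ff m) (t:ℂ) / (t:ℂ) = ((t⁻¹:ℝ):ℂ) * deriv (Ff m) t by
      push_cast; field_simp]
    rw [Complex.re_ofReal_mul]
    field_simp

lemma sphf_differentiableAt (m : ℕ) {t : ℝ} (ht : t ≠ 0) : DifferentiableAt ℝ (sphf m) t := by
  have hev : (fun x : ℝ => (Ff m x).re) =ᶠ[𝓝 t] sphf m :=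
    eventually_of_mem (isOpen_compl_singleton.mem_nhds ht) (fun x hx => (sphf_eq_Ff m x hx).symm)
  exact (hasDerivAt_Ff_re m t).differentiableAt.congr_of_eventuallyEq hev.symm

lemma deriv_sphf (m : ℕ) {t : ℝ} (ht : t ≠ 0) : deriv (sphf m) t = t * sphf (m+1) t := by
  show _ = t * (deriv (sphf m) t / t)
  field_simp

lemma tendsto_sphf (m : ℕ) :
    Tendsto (sphf m) (𝓝[>] (0:ℝ)) (𝓝 ((Ff m 0).re)) := by
  have hc : Tendsto (fun x : ℝ => (Ff m x).re) (𝓝[>] (0:ℝ)) (𝓝 ((Ff m 0).re)) := by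
    have : Continuous fun x : ℝ => (Ff m x).re :=
      Complex.continuous_re.comp ((Ff_differentiable m).continuous.comp Complex.continuous_ofReal)
    simpa using (this.tendsto 0).mono_left nhdsWithin_le_nhds
  refine hc.congr' ?_
  filter_upwards [self_mem_nhdsWithin] with t (ht : (0:ℝ) < t)
  exact (sphf_eq_Ff m t ht.ne').symm


lemma hasDerivAt_sphj (n : ℕ) {t : ℝ} (ht : t ≠ 0) :
    HasDerivAt (sphj n) ((-1)^n * ((n:ℝ) * t^(n-1) * sphf n t + t^n * (t * sphf (n+1) t))) t := by
  have h1 : HasDerivAt (fun x : ℝ => x^n) ((n:ℝ) * t^(n-1)) t := hasDerivAt_pow n t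
  have h2 : HasDerivAt (sphf n) (t * sphf (n+1) t) t := by
    have := (sphf_differentiableAt n ht).hasDerivAt
    rwa [deriv_sphf n ht] at this
  have := (h1.mul h2).const_mul ((-1:ℝ)^n)
  convert this using 1
  · rfl
  · rfl
  funext x; show sphj n x = _; rw [sphj]; simp only [Pi.mul_apply, Pi.neg_apply]; ring

lemma hasDerivAt_sphy (n : ℕ) {t : ℝ} (ht : t ≠ 0) :
    HasDerivAt (sphy n) (-((-1)^n * ((n:ℝ) * t^(n-1) * sphg n t + t^n * (t * sphg (n+1) t)))) t := by
  have h1 : HasDerivAt (fun x : ℝ => x^n) ((n:ℝ) * t^(n-1)) t := hasDerivAt_pow n t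
  have h2 : HasDerivAt (sphg n) (t * sphg (n+1) t) t := by
    have := (sphg_differentiableAt n ht).hasDerivAt
    rwa [deriv_sphg n ht] at this
  have := ((h1.mul h2).const_mul ((-1:ℝ)^n)).neg
  convert this using 1
  · rfl
  · rfl
  funext x; show sphy n x = _; rw [sphy]; simp only [Pi.mul_apply, Pi.neg_apply]; ring

lemma hasDerivAt_sphh (n : ℕ) {t : ℝ} (ht : t ≠ 0) :
    HasDerivAt (sphh n)
      ((((-1)^n * ((n:ℝ) * t^(n-1) * sphf n t + t^n * (t * sphf (n+1) t)) : ℝ) : ℂ)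
        + Complex.I * ((-((-1)^n * ((n:ℝ) * t^(n-1) * sphg n t + t^n * (t * sphg (n+1) t))) : ℝ) : ℂ)) t := by
  exact ((hasDerivAt_sphj n ht).ofReal_comp).add
    (((hasDerivAt_sphy n ht).ofReal_comp).const_mul Complex.I)

lemma sphJ_eq (n : ℕ) (hn : 1 ≤ n) {t : ℝ} (ht : t ≠ 0) :
    sphJ n t = (-1)^n * t^n * (((n:ℝ)+1) * sphf n t + t^2 * sphf (n+1) t) := by
  obtain ⟨N, rfl⟩ : ∃ N, n = N + 1 := ⟨n-1, (Nat.succ_pred_eq_of_pos hn).symm⟩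
  rw [sphJ, sphj, (hasDerivAt_sphj (N+1) ht).deriv]
  simp only [Nat.add_sub_cancel]
  push_cast
  ring

lemma sphH_eq (n : ℕ) (hn : 1 ≤ n) {t : ℝ} (ht : t ≠ 0) :
    sphH n t = (-1)^n * (t:ℂ)^n * (((n:ℂ)+1) * ((sphf n t : ℂ) - Complex.I * (sphg n t : ℂ))
      + (t:ℂ)^2 * ((sphf (n+1) t : ℂ) - Complex.I * (sphg (n+1) t : ℂ))) := by
  obtain ⟨N, rfl⟩ : ∃ N, n = N + 1 := ⟨n-1, (Nat.succ_pred_eq_of_pos hn).symm⟩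
  rw [sphH, sphh, sphj, sphy, (hasDerivAt_sphh (N+1) ht).deriv]
  simp only [Nat.add_sub_cancel]
  push_cast
  ring

lemma sphh_eq (n : ℕ) {t : ℝ} (ht : t ≠ 0) :
    sphh n t = (-1)^n * (t:ℂ)^n * ((sphf n t : ℂ) - Complex.I * (sphg n t : ℂ)) := by
  rw [sphh, sphj, sphy]
  push_cast
  ring

lemma tendsto_pow_zero (k : ℕ) (hk : k ≠ 0) :
    Tendsto (fun t : ℝ => t^k) (𝓝[>] (0:ℝ)) (𝓝 0) := by
  have := ((continuous_pow k (M := ℝ)).tendsto' 0 0 (by simp [zero_pow hk]))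
  exact this.mono_left nhdsWithin_le_nhds

lemma tendsto_pow_mul_sphf (m k : ℕ) (hk : k ≠ 0) :
    Tendsto (fun t : ℝ => t^k * sphf m t) (𝓝[>] (0:ℝ)) (𝓝 0) := by
  simpa using (tendsto_pow_zero k hk).mul (tendsto_sphf m)

lemma tendsto_pow_sphh (n : ℕ) :
    Tendsto (fun t : ℝ => ((t^(n+1) : ℝ) : ℂ) * sphh n t) (𝓝[>] (0:ℝ))
      (𝓝 ((-1:ℂ)^n * (0 - Complex.I * ((Wg n 0 : ℝ) : ℂ)))) := by
  have h1 : Tendsto (fun t : ℝ => ((t^(2*n+1) * sphf n t : ℝ) : ℂ)) (𝓝[>] (0:ℝ)) (𝓝 0) := by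
    exact (Complex.continuous_ofReal.tendsto' 0 0 (by simp)).comp
      (tendsto_pow_mul_sphf n (2*n+1) (by omega))
  have h2 : Tendsto (fun t : ℝ => ((t^(2*n+1) * sphg n t : ℝ) : ℂ)) (𝓝[>] (0:ℝ))
      (𝓝 ((Wg n 0 : ℝ) : ℂ)) :=
    (Complex.continuous_ofReal.tendsto _).comp (tendsto_pow_sphg n)
  have := (h1.sub (h2.const_mul Complex.I)).const_mul ((-1:ℂ)^n)
  refine this.congr' ?_
  filter_upwards [self_mem_nhdsWithin] with t (ht : (0:ℝ) < t)
  rw [sphh_eq n ht.ne']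
  push_cast
  ring

lemma tendsto_pow_sphH (n : ℕ) (hn : 1 ≤ n) :
    Tendsto (fun t : ℝ => ((t^(n+1) : ℝ) : ℂ) * sphH n t) (𝓝[>] (0:ℝ))
      (𝓝 ((-1:ℂ)^n * (((n:ℂ)+1) * (0 - Complex.I * ((Wg n 0 : ℝ) : ℂ))
        + (0 - Complex.I * ((Wg (n+1) 0 : ℝ) : ℂ))))) := by
  have h1 : Tendsto (fun t : ℝ => ((t^(2*n+1) * sphf n t : ℝ) : ℂ)) (𝓝[>] (0:ℝ)) (𝓝 0) := by
    exact (Complex.continuous_ofReal.tendsto' 0 0 (by simp)).comp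
      (tendsto_pow_mul_sphf n (2*n+1) (by omega))
  have h2 : Tendsto (fun t : ℝ => ((t^(2*n+1) * sphg n t : ℝ) : ℂ)) (𝓝[>] (0:ℝ))
      (𝓝 ((Wg n 0 : ℝ) : ℂ)) :=
    (Complex.continuous_ofReal.tendsto _).comp (tendsto_pow_sphg n)
  have h3 : Tendsto (fun t : ℝ => ((t^(2*(n+1)+1) * sphf (n+1) t : ℝ) : ℂ)) (𝓝[>] (0:ℝ)) (𝓝 0) := by
    exact (Complex.continuous_ofReal.tendsto' 0 0 (by simp)).comp
      (tendsto_pow_mul_sphf (n+1) (2*(n+1)+1) (by omega))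
  have h4 : Tendsto (fun t : ℝ => ((t^(2*(n+1)+1) * sphg (n+1) t : ℝ) : ℂ)) (𝓝[>] (0:ℝ))
      (𝓝 ((Wg (n+1) 0 : ℝ) : ℂ)) :=
    (Complex.continuous_ofReal.tendsto _).comp (tendsto_pow_sphg (n+1))
  have := (((h1.sub (h2.const_mul Complex.I)).const_mul ((n:ℂ)+1)).add
    (h3.sub (h4.const_mul Complex.I))).const_mul ((-1:ℂ)^n)
  refine this.congr' ?_
  filter_upwards [self_mem_nhdsWithin] with t (ht : (0:ℝ) < t)
  rw [sphH_eq n hn ht.ne']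
  push_cast
  ring

lemma tendsto_sphj_div (n : ℕ) :
    Tendsto (fun t : ℝ => sphj n t / t^n) (𝓝[>] (0:ℝ)) (𝓝 ((-1:ℝ)^n * (Ff n 0).re)) := by
  have := (tendsto_sphf n).const_mul ((-1:ℝ)^n)
  refine this.congr' ?_
  filter_upwards [self_mem_nhdsWithin] with t (ht : (0:ℝ) < t)
  rw [sphj]
  field_simp [pow_ne_zero n ht.ne']

lemma tendsto_sphJ_div (n : ℕ) (hn : 1 ≤ n) :
    Tendsto (fun t : ℝ => sphJ n t / t^n) (𝓝[>] (0:ℝ))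
      (𝓝 ((-1:ℝ)^n * (((n:ℝ)+1) * (Ff n 0).re))) := by
  have h1 : Tendsto (fun t : ℝ => t^2 * sphf (n+1) t) (𝓝[>] (0:ℝ)) (𝓝 0) :=
    tendsto_pow_mul_sphf (n+1) 2 (by omega)
  have := (((tendsto_sphf n).const_mul ((n:ℝ)+1)).add h1).const_mul ((-1:ℝ)^n)
  rw [add_zero] at this
  refine this.congr' ?_
  filter_upwards [self_mem_nhdsWithin] with t (ht : (0:ℝ) < t)
  rw [sphJ_eq n hn ht.ne']
  field_simp [pow_ne_zero n ht.ne']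

lemma tendsto_sphj_zero (n : ℕ) (hn : 1 ≤ n) :
    Tendsto (fun t : ℝ => sphj n t) (𝓝[>] (0:ℝ)) (𝓝 0) := by
  have := ((tendsto_pow_zero n (by omega)).mul (tendsto_sphf n)).const_mul ((-1:ℝ)^n)
  simp only [zero_mul, mul_zero] at this
  refine this.congr ?_
  intro t; rw [sphj]; ring

lemma tendsto_sphJ_zero (n : ℕ) (hn : 1 ≤ n) :
    Tendsto (fun t : ℝ => sphJ n t) (𝓝[>] (0:ℝ)) (𝓝 0) := by
  have := (tendsto_sphJ_div n hn).mul (tendsto_pow_zero n (by omega))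
  rw [mul_zero] at this
  refine this.congr' ?_
  filter_upwards [self_mem_nhdsWithin] with t (ht : (0:ℝ) < t)
  field_simp

lemma key_alg (d s n3 n4 n3' n4' H2 J2 Jk Hk q : ℂ)
    (hd : d ≠ 0) (hs : s ≠ 0) (hP : s * (n3 * H2 + d * J2) ≠ 0) :
    q * ((n3/d * (n4'/d) - n4/d * (n3'/d)) * H2 + n4'/d * J2) / (n3/d * H2 + J2) * Jk + q * Hk
    = q * ((s*n3) * (s*n4') * H2 - s^2 * n4 * n3' * H2 + (s*d) * (s*n4') * J2)
        / ((s*d) * (s * (n3 * H2 + d * J2))) * Jk + q * Hk := by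
  have h2 : n3 * H2 + d * J2 ≠ 0 := fun h => hP (by rw [h, mul_zero])
  have hden : n3/d * H2 + J2 ≠ 0 := by
    have : n3/d * H2 + J2 = (n3 * H2 + d * J2) / d := by field_simp
    rw [this]
    exact div_ne_zero h2 hd
  have hB : (s*d) * (s * (n3 * H2 + d * J2)) ≠ 0 := mul_ne_zero (mul_ne_zero hs hd) hP
  have key : q * ((n3/d * (n4'/d) - n4/d * (n3'/d)) * H2 + n4'/d * J2) / (n3/d * H2 + J2)
      = q * ((s*n3) * (s*n4') * H2 - s^2 * n4 * n3' * H2 + (s*d) * (s*n4') * J2)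
        / ((s*d) * (s * (n3 * H2 + d * J2))) := by
    rw [div_eq_div_iff hden hB]
    field_simp
  rw [key]

/-- The `n`-th coefficient of the tangential trace at the cloaking interface,
`β_ρ 𝒥_n(kω) + q ℋ_n(kω)`, converges as `ρ → 0⁺` to
`q (j_n(kω) ℋ_n(kω) - h_n(kω) 𝒥_n(kω))/j_n(kω)`, which is in general nonzero. -/
theorem tangential_trace_limit (ε₀ μ₀ ω : ℝ)
    (hε : 0 < ε₀) (hμ : 0 < μ₀) (hω : 0 < ω)
    (k : ℝ) (hk : k = Real.sqrt (μ₀ * ε₀)) (n : ℕ) (hn : 1 ≤ n)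
    (hj : sphj n (k * ω) ≠ 0) (hJ2 : sphJ n (2 * ω) ≠ 0) (q : ℂ) :
    Tendsto (fun ρ : ℝ =>
        (q * ((t3 ε₀ μ₀ ω k n ρ * t4' ε₀ μ₀ ω k n ρ
              - t4 ε₀ μ₀ ω k n ρ * t3' ε₀ μ₀ ω k n ρ) * sphH n (2 * ω)
            + t4' ε₀ μ₀ ω k n ρ * sphJ n (2 * ω))
          / (t3 ε₀ μ₀ ω k n ρ * sphH n (2 * ω) + sphJ n (2 * ω))) * sphJ n (k * ω)
          + q * sphH n (k * ω))
      (𝓝[>] 0)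
      (𝓝 (q * (sphj n (k * ω) * sphH n (k * ω) - sphh n (k * ω) * sphJ n (k * ω))
        / sphj n (k * ω))) := by
  have hk0 : 0 < k := hk ▸ Real.sqrt_pos.mpr (by positivity)
  have hμs : (0:ℝ) < (Real.sqrt μ₀)⁻¹ := by
    rw [inv_pos]; exact Real.sqrt_pos.mpr hμ
  set L := 𝓝[>] (0:ℝ) with hL
  -- abbreviations
  set jk := sphj n (k*ω) with hjk_def
  set Jk := sphJ n (k*ω) with hJk_def
  set hkC := sphh n (k*ω) with hhk_def
  set HkC := sphH n (k*ω) with hHk_def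
  set J2 := sphJ n (2*ω) with hJ2_def
  set H2 := sphH n (2*ω) with hH2_def
  set μi := (Real.sqrt μ₀)⁻¹ with hμi_def
  set εi := (Real.sqrt ε₀)⁻¹ with hεi_def
  set cg := Wg n 0 with hcg_def
  set cg1 := Wg (n+1) 0 with hcg1_def
  set LHc := (-1:ℂ)^n * (((n:ℂ)+1) * (0 - Complex.I * (cg:ℂ)) + (0 - Complex.I * (cg1:ℂ)))
    with hLHc_def
  set Lh := (-1:ℂ)^n * (0 - Complex.I * (cg:ℂ)) with hLh_def
  set LD := -((μi:ℂ) * (k:ℂ) * (jk:ℂ)) * LHc with hLD_def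
  set LY := (μi:ℂ) * (k:ℂ) * hkC * LHc with hLY_def
  -- nonvanishing
  have hLHc_ne : LHc ≠ 0 := by
    have hcg1C : (cg1:ℂ) = -(2*(n:ℂ)+1) * (cg:ℂ) := by
      rw [hcg1_def, hcg_def, Wg_zero]; push_cast; ring
    have : LHc = (-1:ℂ)^n * Complex.I * (n:ℂ) * (cg:ℂ) := by
      rw [hLHc_def, hcg1C]; ring
    rw [this]
    exact mul_ne_zero (mul_ne_zero (mul_ne_zero (pow_ne_zero _ (by norm_num))
      Complex.I_ne_zero) (Nat.cast_ne_zero.mpr (by omega)))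
      (Complex.ofReal_ne_zero.mpr (Wg_zero_ne n))
  have hLD_ne : LD ≠ 0 := by
    refine mul_ne_zero (neg_ne_zero.mpr (mul_ne_zero (mul_ne_zero ?_ ?_) ?_)) hLHc_ne
    · exact Complex.ofReal_ne_zero.mpr hμs.ne'
    · exact Complex.ofReal_ne_zero.mpr hk0.ne'
    · exact Complex.ofReal_ne_zero.mpr hj
  have hLDJ2_ne : LD * (J2:ℂ) ≠ 0 :=
    mul_ne_zero hLD_ne (Complex.ofReal_ne_zero.mpr hJ2)
  -- the map ρ ↦ ω * ρ
  have hφ : Tendsto (fun ρ : ℝ => ω * ρ) L L := by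
    rw [hL]
    apply tendsto_nhdsWithin_of_tendsto_nhds_of_eventually_within
    · exact ((continuous_const.mul continuous_id).tendsto' 0 0 (by simp)).mono_left
        nhdsWithin_le_nhds
    · filter_upwards [self_mem_nhdsWithin] with ρ (hρ : (0:ℝ) < ρ)
      exact mul_pos hω hρ
  -- elementary limits
  have hρC : Tendsto (fun ρ : ℝ => (ρ:ℂ)) L (𝓝 0) :=
    (Complex.continuous_ofReal.tendsto' 0 0 (by simp)).mono_left nhdsWithin_le_nhds
  have hsC : Tendsto (fun ρ : ℝ => (((ω*ρ)^(n+1) : ℝ) : ℂ)) L (𝓝 0) :=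
    (Complex.continuous_ofReal.tendsto' 0 0 (by simp)).comp
      ((tendsto_pow_zero (n+1) (by omega)).comp hφ)
  have hshC : Tendsto (fun ρ : ℝ => (((ω*ρ)^(n+1) : ℝ) : ℂ) * sphh n (ω*ρ)) L (𝓝 Lh) :=
    (tendsto_pow_sphh n).comp hφ
  have hsHC : Tendsto (fun ρ : ℝ => (((ω*ρ)^(n+1) : ℝ) : ℂ) * sphH n (ω*ρ)) L (𝓝 LHc) :=
    (tendsto_pow_sphH n hn).comp hφ
  have hjC : Tendsto (fun ρ : ℝ => ((sphj n (ω*ρ) : ℝ) : ℂ)) L (𝓝 0) :=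
    (Complex.continuous_ofReal.tendsto' 0 0 (by simp)).comp
      ((tendsto_sphj_zero n hn).comp hφ)
  have hJC : Tendsto (fun ρ : ℝ => ((sphJ n (ω*ρ) : ℝ) : ℂ)) L (𝓝 0) :=
    (Complex.continuous_ofReal.tendsto' 0 0 (by simp)).comp
      ((tendsto_sphJ_zero n hn).comp hφ)
  have hjdC : Tendsto (fun ρ : ℝ => ((sphj n (ω*ρ) / (ω*ρ)^n : ℝ) : ℂ)) L
      (𝓝 (((-1:ℝ)^n * (Ff n 0).re : ℝ) : ℂ)) :=
    (Complex.continuous_ofReal.tendsto _).comp ((tendsto_sphj_div n).comp hφ)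
  have hJdC : Tendsto (fun ρ : ℝ => ((sphJ n (ω*ρ) / (ω*ρ)^n : ℝ) : ℂ)) L
      (𝓝 (((-1:ℝ)^n * (((n:ℝ)+1) * (Ff n 0).re) : ℝ) : ℂ)) :=
    (Complex.continuous_ofReal.tendsto _).comp ((tendsto_sphJ_div n hn).comp hφ)
  -- assembled limits
  have hX : Tendsto (fun ρ : ℝ => (((ω*ρ)^(n+1) : ℝ) : ℂ) * Dn' ε₀ μ₀ ω k n ρ) L (𝓝 LD) := by
    have h1 := (((hρC.const_mul (εi:ℂ)).mul hshC).mul_const (Jk:ℂ)).sub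
      ((hsHC.const_mul ((μi:ℂ) * (k:ℂ))).mul_const (jk:ℂ))
    have hval : (εi:ℂ) * 0 * Lh * (Jk:ℂ) - (μi:ℂ) * (k:ℂ) * LHc * (jk:ℂ) = LD := by
      rw [hLD_def]; ring
    rw [hval] at h1
    refine h1.congr ?_
    intro ρ
    simp only [Dn', hjk_def, hJk_def, hμi_def, hεi_def]
    ring
  have hY : Tendsto (fun ρ : ℝ => (((ω*ρ)^(n+1) : ℝ) : ℂ) *
      ((μi:ℂ) * (k:ℂ) * hkC * sphH n (ω*ρ) - (εi:ℂ) * (ρ:ℂ) * HkC * sphh n (ω*ρ))) L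
      (𝓝 LY) := by
    have h1 := (hsHC.const_mul ((μi:ℂ) * (k:ℂ) * hkC)).sub
      (((hρC.const_mul (εi:ℂ)).mul_const HkC).mul hshC)
    have hval : (μi:ℂ) * (k:ℂ) * hkC * LHc - (εi:ℂ) * 0 * HkC * Lh = LY := by
      rw [hLY_def]; ring
    rw [hval] at h1
    refine h1.congr ?_
    intro ρ
    ring
  have hn3 : Tendsto (fun ρ : ℝ =>
      ((μi:ℂ) * (k:ℂ) * (sphJ n (ω*ρ) : ℂ) * (jk:ℂ)
        - (εi:ℂ) * (ρ:ℂ) * (sphj n (ω*ρ) : ℂ) * (Jk:ℂ))) L (𝓝 0) := by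
    have h1 := ((hJC.const_mul ((μi:ℂ) * (k:ℂ))).mul_const (jk:ℂ)).sub
      (((hρC.const_mul (εi:ℂ)).mul hjC).mul_const (Jk:ℂ))
    simpa using h1
  have hn4 : Tendsto (fun ρ : ℝ =>
      ((ρ:ℂ) * ((sphJ n (ω*ρ) : ℂ) * sphh n (ω*ρ) - (sphj n (ω*ρ) : ℂ) * sphH n (ω*ρ)))) L
      (𝓝 (((((-1:ℝ)^n * (((n:ℝ)+1) * (Ff n 0).re) : ℝ) : ℂ) * Lh
        - (((-1:ℝ)^n * (Ff n 0).re : ℝ) : ℂ) * LHc) / (ω:ℂ))) := by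
    have h1 := ((hJdC.mul hshC).sub (hjdC.mul hsHC)).div_const (ω:ℂ)
    refine h1.congr' ?_
    filter_upwards [self_mem_nhdsWithin] with ρ (hρ : (0:ℝ) < ρ)
    have htne : (ω*ρ) ≠ 0 := (mul_pos hω hρ).ne'
    have hωC : ((ω:ℝ):ℂ) ≠ 0 := Complex.ofReal_ne_zero.mpr hω.ne'
    have e1 : sphJ n (ω*ρ)/(ω*ρ)^n * ((ω*ρ)^(n+1)) = ω*ρ*sphJ n (ω*ρ) := by
      field_simp [pow_succ]
      ring
    have e2 : sphj n (ω*ρ)/(ω*ρ)^n * ((ω*ρ)^(n+1)) = ω*ρ*sphj n (ω*ρ) := by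
      field_simp [pow_succ]
      ring
    have e1C : ((sphJ n (ω*ρ)/(ω*ρ)^n : ℝ):ℂ) * (((ω*ρ)^(n+1):ℝ):ℂ)
        = ((ω:ℝ):ℂ)*((ρ:ℝ):ℂ)*((sphJ n (ω*ρ):ℝ):ℂ) := by
      rw [← Complex.ofReal_mul, e1]; push_cast; ring
    have e2C : ((sphj n (ω*ρ)/(ω*ρ)^n : ℝ):ℂ) * (((ω*ρ)^(n+1):ℝ):ℂ)
        = ((ω:ℝ):ℂ)*((ρ:ℝ):ℂ)*((sphj n (ω*ρ):ℝ):ℂ) := by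
      rw [← Complex.ofReal_mul, e2]; push_cast; ring
    rw [div_eq_iff hωC]
    linear_combination sphh n (ω*ρ) * e1C - sphH n (ω*ρ) * e2C
  -- products
  have hsn3 : Tendsto (fun ρ : ℝ => (((ω*ρ)^(n+1) : ℝ) : ℂ) *
      ((μi:ℂ) * (k:ℂ) * (sphJ n (ω*ρ) : ℂ) * (jk:ℂ)
        - (εi:ℂ) * (ρ:ℂ) * (sphj n (ω*ρ) : ℂ) * (Jk:ℂ))) L (𝓝 0) := by
    have := hsC.mul hn3
    rwa [mul_zero] at this
  have hs2n4 : Tendsto (fun ρ : ℝ => (((ω*ρ)^(n+1) : ℝ) : ℂ)^2 *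
      ((ρ:ℂ) * ((sphJ n (ω*ρ) : ℂ) * sphh n (ω*ρ) - (sphj n (ω*ρ) : ℂ) * sphH n (ω*ρ)))) L
      (𝓝 0) := by
    have := (hsC.pow 2).mul hn4
    rwa [show ((0:ℂ)^2) = 0 by norm_num, zero_mul] at this
  have hP : Tendsto (fun ρ : ℝ => (((ω*ρ)^(n+1) : ℝ) : ℂ) *
      (((μi:ℂ) * (k:ℂ) * (sphJ n (ω*ρ) : ℂ) * (jk:ℂ)
          - (εi:ℂ) * (ρ:ℂ) * (sphj n (ω*ρ) : ℂ) * (Jk:ℂ)) * H2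
        + Dn' ε₀ μ₀ ω k n ρ * (J2:ℂ))) L (𝓝 (LD * (J2:ℂ))) := by
    have h1 := (hsn3.mul_const H2).add (hX.mul_const (J2:ℂ))
    rw [zero_mul, zero_add] at h1
    refine h1.congr ?_
    intro ρ
    ring
  have hDEN := hX.mul hP
  have hDEN_ne : LD * (LD * (J2:ℂ)) ≠ 0 := mul_ne_zero hLD_ne hLDJ2_ne
  have hNUM : Tendsto (fun ρ : ℝ =>
      ((((ω*ρ)^(n+1) : ℝ) : ℂ) * ((μi:ℂ) * (k:ℂ) * (sphJ n (ω*ρ) : ℂ) * (jk:ℂ)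
          - (εi:ℂ) * (ρ:ℂ) * (sphj n (ω*ρ) : ℂ) * (Jk:ℂ)))
        * ((((ω*ρ)^(n+1) : ℝ) : ℂ) *
          ((μi:ℂ) * (k:ℂ) * hkC * sphH n (ω*ρ) - (εi:ℂ) * (ρ:ℂ) * HkC * sphh n (ω*ρ))) * H2
      - (((ω*ρ)^(n+1) : ℝ) : ℂ)^2 *
          ((ρ:ℂ) * ((sphJ n (ω*ρ) : ℂ) * sphh n (ω*ρ) - (sphj n (ω*ρ) : ℂ) * sphH n (ω*ρ)))
          * ((Jk:ℂ) * hkC - HkC * (jk:ℂ)) * H2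
      + ((((ω*ρ)^(n+1) : ℝ) : ℂ) * Dn' ε₀ μ₀ ω k n ρ)
        * ((((ω*ρ)^(n+1) : ℝ) : ℂ) *
          ((μi:ℂ) * (k:ℂ) * hkC * sphH n (ω*ρ) - (εi:ℂ) * (ρ:ℂ) * HkC * sphh n (ω*ρ))) * (J2:ℂ))
      L (𝓝 (LD * LY * (J2:ℂ))) := by
    have h1 := (((hsn3.mul hY).mul_const H2).sub
      ((hs2n4.mul_const ((Jk:ℂ) * hkC - HkC * (jk:ℂ))).mul_const H2)).add
      ((hX.mul hY).mul_const (J2:ℂ))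
    convert h1 using 2
    ring
  have hG := ((hNUM.const_mul q).div hDEN hDEN_ne).mul_const (Jk:ℂ) |>.add_const (q * HkC)
  have hval_final : q * (LD * LY * (J2:ℂ)) / (LD * (LD * (J2:ℂ))) * (Jk:ℂ) + q * HkC
      = q * ((jk:ℂ) * HkC - hkC * (Jk:ℂ)) / (jk:ℂ) := by
    have h3 : ((jk:ℝ):ℂ) ≠ 0 := Complex.ofReal_ne_zero.mpr hj
    have e1 : LD * LY * (J2:ℂ) / (LD * (LD * (J2:ℂ))) = LY / LD := by
      rw [div_eq_div_iff hDEN_ne hLD_ne]; ring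
    have e2 : LY / LD = -(hkC / (jk:ℂ)) := by
      rw [div_eq_iff hLD_ne, hLY_def, hLD_def]
      field_simp
    rw [mul_div_assoc, e1, e2]
    field_simp
    ring
  rw [← hval_final]
  refine Tendsto.congr' ?_ hG
  filter_upwards [self_mem_nhdsWithin, hX.eventually_ne hLD_ne, hP.eventually_ne hLDJ2_ne]
    with ρ hρ hXne hPne
  have hsne : (((ω*ρ)^(n+1) : ℝ) : ℂ) ≠ 0 :=
    Complex.ofReal_ne_zero.mpr (pow_ne_zero _ (mul_pos hω (hρ : (0:ℝ) < ρ)).ne')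
  have hdne : Dn' ε₀ μ₀ ω k n ρ ≠ 0 := by
    intro h; exact hXne (by rw [h, mul_zero])
  symm
  simp only [t3, t4, t3', t4']
  exact key_alg _ _ _ _ _ _ _ _ _ _ _ hdne hsne hPne
end
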